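/- Let Ω ⊆ ℝⁿ be a connected open set and let f : Ω → ℝ be a real analytic function that is not identically zero on Ω. Then the zero set {x ∈ Ω : f(x) = 0} has Lebesgue measure zero. -/

import Mathlib

open MeasureTheory Metric Set Filter Topology
open scoped Nat

namespace Stmt17Aux

/-- A subset of `ℝ` all of whose points are isolated is countable. -/
lemma countable_of_isolated {Z : Set ℝ}
    (h : ∀ z ∈ Z, ∀ᶠ t in 𝓝[≠] z, t ∉ Z) : Z.Countable := by
  rw [← Set.countable_coe_iff]
  have hd : DiscreteTopology Z := by
    rw [discreteTopology_subtype_iff]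
    intro x hx
    rw [← Filter.empty_mem_iff_bot]
    have h4 := Filter.inter_mem (Filter.mem_inf_of_left (h x hx))
      (Filter.mem_inf_of_right (Filter.mem_principal_self Z))
    refine Filter.mem_of_superset h4 ?_
    rintro t ⟨ht1, ht2⟩
    exact absurd ht2 ht1
  exact TopologicalSpace.separableSpace_iff_countable.mp inferInstance

/-- The zero set of a 1-D analytic function, not identically zero on an open preconnected set,
is countable. -/
lemma oneD_countable (h : ℝ → ℝ) (I : Set ℝ) (hIo : IsOpen I) (hIc : IsPreconnected I)
    (hh : AnalyticOnNhd ℝ h I) (hne : ∃ t ∈ I, h t ≠ 0) :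
    {t ∈ I | h t = 0}.Countable := by
  apply countable_of_isolated
  rintro z ⟨hzI, hz0⟩
  rcases (hh z hzI).eventually_eq_zero_or_eventually_ne_zero with h0 | h1
  · obtain ⟨t, htI, ht⟩ := hne
    exact absurd (hh.eqOn_zero_of_preconnected_of_eventuallyEq_zero hIc hzI h0 htI) ht
  · filter_upwards [h1] with t ht hmem
    exact ht hmem.2

/-- A 1-D function analytic at a point, all of whose iterated derivatives vanish there, vanishes
in a neighborhood. -/
lemma oneD_eventually_zero {h : ℝ → ℝ} {t0 : ℝ} (hh : AnalyticAt ℝ h t0)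
    (hd : ∀ k, iteratedDeriv k h t0 = 0) : h =ᶠ[𝓝 t0] 0 := by
  obtain ⟨p, hp⟩ := hh
  obtain ⟨r, hpr⟩ := hp
  have key : ∀ s ∈ EMetric.ball (0 : ℝ) r, h (t0 + s) = 0 := by
    intro s hs
    have hsum := hpr.hasSum_iteratedFDeriv hs
    have hz : (fun k => (k ! : ℝ)⁻¹ • iteratedFDeriv ℝ k h t0 fun _ => s)
        = (fun (_ : ℕ) => (0 : ℝ)) := by
      funext k
      rw [iteratedFDeriv_apply_eq_iteratedDeriv_mul_prod, hd k]
      simp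
    rw [hz] at hsum
    simpa using hsum.unique hasSum_zero
  have hball : EMetric.ball (0 : ℝ) r ∈ 𝓝 (0 : ℝ) := EMetric.ball_mem_nhds _ hpr.r_pos
  have hcont : Tendsto (fun u : ℝ => u - t0) (𝓝 t0) (𝓝 0) := by
    simpa using Filter.Tendsto.sub_const (tendsto_id : Tendsto id (𝓝 t0) (𝓝 t0)) t0
  filter_upwards [hcont hball] with u hu
  simpa using key (u - t0) hu

/-- Iterated derivatives of a function vanishing on an open set vanish there. -/
lemma iteratedDeriv_eqOn_zero {h : ℝ → ℝ} {I : Set ℝ} (hI : IsOpen I)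
    (h0 : Set.EqOn h 0 I) (k : ℕ) : Set.EqOn (iteratedDeriv k h) 0 I := by
  induction k with
  | zero => simpa [iteratedDeriv_zero] using h0
  | succ k ih =>
    intro t ht
    rw [iteratedDeriv_succ]
    have hev : iteratedDeriv k h =ᶠ[𝓝 t] (fun _ => (0 : ℝ)) := by
      filter_upwards [hI.mem_nhds ht] with s hs using ih hs
    have : deriv (iteratedDeriv k h) t = deriv (fun _ => (0 : ℝ)) t := hev.deriv_eq
    simpa using this

variable {m : ℕ}

lemma insertNth_eq_add (i : Fin (m + 1)) (y : Fin m → ℝ) (t : ℝ) :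
    Fin.insertNth (α := fun _ => ℝ) i t y
      = Fin.insertNth (α := fun _ => ℝ) i 0 y + t • (Pi.single i 1 : Fin (m + 1) → ℝ) := by
  funext j
  refine Fin.succAboveCases i ?_ ?_ j
  · simp
  · intro j
    simp [Pi.single_eq_of_ne (Fin.succAbove_ne i j)]

noncomputable def insertCLM (i : Fin (m + 1)) : (Fin m → ℝ) →L[ℝ] (Fin (m + 1) → ℝ) :=
  LinearMap.toContinuousLinearMap
  { toFun := fun y => Fin.insertNth (α := fun _ => ℝ) i 0 y
    map_add' := fun a b => by
      funext j
      refine Fin.succAboveCases i ?_ ?_ j <;> simp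
    map_smul' := fun c a => by
      funext j
      refine Fin.succAboveCases i ?_ ?_ j <;> simp }

lemma analyticOnNhd_insertNth (i : Fin (m + 1)) (a : ℝ) :
    AnalyticOnNhd ℝ (fun y : Fin m → ℝ => (i.insertNth a y : Fin (m + 1) → ℝ)) univ := by
  have heq : (fun y : Fin m → ℝ => (i.insertNth a y : Fin (m + 1) → ℝ))
      = fun y => Fin.insertNth (α := fun _ => ℝ) i a 0 + insertCLM i y := by
    funext y j
    refine Fin.succAboveCases i ?_ ?_ j
    · simp [insertCLM]
    · intro j
      simp [insertCLM, Pi.single_eq_of_ne (Fin.succAbove_ne i j)]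
  rw [heq]
  exact analyticOnNhd_const.add ((insertCLM i).analyticOnNhd univ)

lemma analyticOnNhd_line (i : Fin (m + 1)) (y : Fin m → ℝ) :
    AnalyticOnNhd ℝ (fun t : ℝ => (i.insertNth t y : Fin (m + 1) → ℝ)) univ := by
  have heq : (fun t : ℝ => (i.insertNth t y : Fin (m + 1) → ℝ))
      = fun t => Fin.insertNth (α := fun _ => ℝ) i 0 y +
          (ContinuousLinearMap.toSpanSingleton ℝ (Pi.single i 1 : Fin (m + 1) → ℝ)) t := by
    funext t
    rw [insertNth_eq_add]
    simp [ContinuousLinearMap.toSpanSingleton_apply]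
  rw [heq]
  exact analyticOnNhd_const.add
    ((ContinuousLinearMap.toSpanSingleton ℝ (Pi.single i 1)).analyticOnNhd univ)

lemma hasDerivAt_line (i : Fin (m + 1)) (y : Fin m → ℝ) (t : ℝ) :
    HasDerivAt (fun s : ℝ => (i.insertNth s y : Fin (m + 1) → ℝ))
      (Pi.single i 1 : Fin (m + 1) → ℝ) t := by
  have heq : (fun s : ℝ => (i.insertNth s y : Fin (m + 1) → ℝ))
      = fun s => Fin.insertNth (α := fun _ => ℝ) i 0 y
          + s • (Pi.single i 1 : Fin (m + 1) → ℝ) :=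
    funext (insertNth_eq_add i y)
  rw [heq]
  simpa using ((hasDerivAt_id t).smul_const (Pi.single i 1 : Fin (m + 1) → ℝ)).const_add
    (Fin.insertNth (α := fun _ => ℝ) i 0 y)

lemma insertNth_mem_ball_iff {c : Fin (m + 1) → ℝ} {r : ℝ} (hr : 0 < r)
    (i : Fin (m + 1)) (t : ℝ) (y : Fin m → ℝ) :
    i.insertNth t y ∈ ball c r ↔ t ∈ ball (c i) r ∧ y ∈ ball (c ∘ i.succAbove) r := by
  simp only [mem_ball, dist_pi_lt_iff hr, Fin.forall_iff_succAbove i,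
    Fin.insertNth_apply_same, Fin.insertNth_apply_succAbove, Function.comp]

variable {E : Type*} [NormedAddCommGroup E] [NormedSpace ℝ E]

noncomputable def dirDeriv (v : E) (f : E → ℝ) : ℕ → E → ℝ
  | 0 => f
  | k + 1 => fun x => fderiv ℝ (dirDeriv v f k) x v

lemma dirDeriv_analytic (v : E) {f : E → ℝ} {U : Set E} (hf : AnalyticOnNhd ℝ f U) :
    ∀ k, AnalyticOnNhd ℝ (dirDeriv v f k) U := by
  intro k
  induction k with
  | zero => exact hf
  | succ k ih =>
    have h1 := ih.fderiv
    have heq : dirDeriv v f (k + 1)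
        = (ContinuousLinearMap.apply ℝ ℝ v) ∘ (fderiv ℝ (dirDeriv v f k)) := rfl
    rw [heq]
    exact ((ContinuousLinearMap.apply ℝ ℝ v).analyticOnNhd univ).comp h1 (mapsTo_univ _ _)

/-- Main ball version: the zero set of an analytic function that is not identically zero on a
metric ball in `ℝⁿ` (sup norm `Pi` space) is Lebesgue-null. -/
theorem ball_case : ∀ n : ℕ, ∀ (f : (Fin n → ℝ) → ℝ) (c : Fin n → ℝ) (r : ℝ),
    AnalyticOnNhd ℝ f (ball c r) → (∃ x ∈ ball c r, f x ≠ 0) →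
    volume {x ∈ ball c r | f x = 0} = 0 := by
  intro n
  induction n with
  | zero =>
    rintro f c r hf ⟨x0, hx0, hfx0⟩
    have he : {x ∈ ball c r | f x = 0} = ∅ := by
      ext x
      simp only [mem_setOf_eq, mem_empty_iff_false, iff_false, not_and]
      intro hx hfx
      have hxx : x = x0 := funext fun j => j.elim0
      exact hfx0 (hxx ▸ hfx)
    rw [he]
    simp
  | succ n IH =>
    rintro f c r hf ⟨x0, hx0, hfx0⟩
    have hr : 0 < r := nonempty_ball.mp ⟨x0, hx0⟩
    set i : Fin (n + 1) := 0 with hi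
    set v : Fin (n + 1) → ℝ := Pi.single i 1 with hv
    set B := ball c r with hB
    set c' : Fin n → ℝ := c ∘ i.succAbove with hc'
    set B' := ball c' r with hB'
    set I := ball (c i) r with hIdef
    have hciI : c i ∈ I := mem_ball_self hr
    have hg : ∀ k, AnalyticOnNhd ℝ (dirDeriv v f k) B := dirDeriv_analytic v hf
    have chain : ∀ (k : ℕ) (y : Fin n → ℝ) (t : ℝ), i.insertNth t y ∈ B →
        HasDerivAt (fun s => dirDeriv v f k (i.insertNth s y))
          (dirDeriv v f (k + 1) (i.insertNth t y)) t := by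
      intro k y t hmem
      have hd : DifferentiableAt ℝ (dirDeriv v f k) (i.insertNth t y) :=
        (hg k _ hmem).differentiableAt
      exact hd.hasFDerivAt.comp_hasDerivAt t (hasDerivAt_line i y t)
    have slice_an : ∀ y ∈ B', AnalyticOnNhd ℝ (fun s => f (i.insertNth s y)) I := by
      intro y hy
      exact hf.comp ((analyticOnNhd_line i y).mono (subset_univ I))
        (fun t ht => (insertNth_mem_ball_iff hr i t y).2 ⟨ht, hy⟩)
    have iter : ∀ (y : Fin n → ℝ), y ∈ B' → ∀ (k : ℕ), ∀ t ∈ I,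
        iteratedDeriv k (fun s => f (i.insertNth s y)) t = dirDeriv v f k (i.insertNth t y) := by
      intro y hy k
      induction k with
      | zero => intro t _; simp [iteratedDeriv_zero, dirDeriv]
      | succ k ih =>
        intro t ht
        rw [iteratedDeriv_succ]
        have hev : iteratedDeriv k (fun s => f (i.insertNth s y))
            =ᶠ[𝓝 t] (fun s => dirDeriv v f k (i.insertNth s y)) := by
          filter_upwards [isOpen_ball.mem_nhds ht] with s hs using ih s hs
        rw [hev.deriv_eq]
        have hmem : i.insertNth t y ∈ B := (insertNth_mem_ball_iff hr i t y).2 ⟨ht, hy⟩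
        exact (chain k y t hmem).deriv
    by_cases hall : ∀ (k : ℕ) (y : Fin n → ℝ), y ∈ B' →
        dirDeriv v f k (i.insertNth (c i) y) = 0
    · exfalso
      have hzero : ∀ y ∈ B', ∀ t ∈ I, f (i.insertNth t y) = 0 := by
        intro y hy
        have han := slice_an y hy
        have hder : ∀ k, iteratedDeriv k (fun s => f (i.insertNth s y)) (c i) = 0 := fun k =>
          (iter y hy k (c i) hciI).trans (hall k y hy)
        have hev := oneD_eventually_zero (han (c i) hciI) hder
        intro t ht
        have := han.eqOn_zero_of_preconnected_of_eventuallyEq_zero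
          (convex_ball (c i) r).isPreconnected hciI hev ht
        simpa using this
      have h1 : i.insertNth (x0 i) (i.removeNth x0) = x0 := Fin.insertNth_self_removeNth i x0
      have h2 : i.insertNth (x0 i) (i.removeNth x0) ∈ B := by rw [h1]; exact hx0
      obtain ⟨ht, hy⟩ := (insertNth_mem_ball_iff hr i (x0 i) (i.removeNth x0)).1 h2
      have := hzero (i.removeNth x0) hy (x0 i) ht
      rw [h1] at this
      exact hfx0 this
    · push_neg at hall
      obtain ⟨k, y0, hy0, hGk⟩ := hall
      set G := fun y : Fin n → ℝ => dirDeriv v f k (i.insertNth (c i) y) with hGdef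
      have hGan : AnalyticOnNhd ℝ G B' := by
        refine (hg k).comp ((analyticOnNhd_insertNth i (c i)).mono (subset_univ B')) ?_
        intro y hy
        exact (insertNth_mem_ball_iff hr i (c i) y).2 ⟨hciI, hy⟩
      have hY : volume {y ∈ B' | G y = 0} = 0 := IH G c' r hGan ⟨y0, hy0, hGk⟩
      set A := {x ∈ B | f x = 0} with hAdef
      have hopen : IsOpen {x | x ∈ B ∧ f x ≠ 0} := by
        rw [isOpen_iff_mem_nhds]
        rintro x ⟨hxB, hxf⟩
        filter_upwards [isOpen_ball.mem_nhds hxB, (hf x hxB).continuousAt.eventually_ne hxf]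
          with z h1 h2 using ⟨h1, h2⟩
      have hAeq : A = B ∩ {x | x ∈ B ∧ f x ≠ 0}ᶜ := by
        ext x
        simp only [hAdef, mem_setOf_eq, mem_inter_iff, mem_compl_iff]
        tauto
      have hAm : MeasurableSet A := by
        rw [hAeq]
        exact isOpen_ball.measurableSet.inter hopen.measurableSet.compl
      set e := MeasurableEquiv.piFinSuccAbove (fun _ : Fin (n + 1) => ℝ) i with hedef
      have hep : MeasurePreserving e volume
          ((volume : Measure ℝ).prod (volume : Measure (Fin n → ℝ))) := by
        have h := measurePreserving_piFinSuccAbove (fun _ : Fin (n + 1) => (volume : Measure ℝ)) i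
        rw [hedef]
        simpa [← volume_pi] using h
      have hsm : MeasurableSet (e.symm ⁻¹' A) := e.symm.measurable hAm
      have h1 : volume A = ((volume : Measure ℝ).prod volume) (e.symm ⁻¹' A) := by
        have := hep.measure_preimage hsm.nullMeasurableSet
        have hpre : e ⁻¹' (e.symm ⁻¹' A) = A := by
          ext x; simp
        rwa [hpre] at this
      have hsm2 : MeasurableSet (Prod.swap ⁻¹' (e.symm ⁻¹' A) : Set ((Fin n → ℝ) × ℝ)) :=
        measurable_swap hsm
      have h2 : ((volume : Measure ℝ).prod volume) (e.symm ⁻¹' A)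
          = ((volume : Measure (Fin n → ℝ)).prod volume) (Prod.swap ⁻¹' (e.symm ⁻¹' A)) :=
        (Measure.measurePreserving_swap.measure_preimage hsm.nullMeasurableSet).symm
      have h3 : ((volume : Measure (Fin n → ℝ)).prod volume) (Prod.swap ⁻¹' (e.symm ⁻¹' A)) = 0 := by
        rw [Measure.measure_prod_null hsm2]
        have hae : ∀ᵐ y : Fin n → ℝ, y ∉ {y ∈ B' | G y = 0} :=
          measure_eq_zero_iff_ae_notMem.mp hY
        filter_upwards [hae] with y hyY
        have hset : (Prod.mk y ⁻¹' (Prod.swap ⁻¹' (e.symm ⁻¹' A)))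
            = {t | i.insertNth t y ∈ A} := by
          ext t
          simp only [mem_preimage, Prod.swap_prod_mk, mem_setOf_eq]
          have : e.symm (t, y) = i.insertNth t y := rfl
          rw [this]
        show volume (Prod.mk y ⁻¹' (Prod.swap ⁻¹' (e.symm ⁻¹' A))) = 0
        rw [hset]
        by_cases hyB : y ∈ B'
        · have hGy : G y ≠ 0 := fun h0 => hyY ⟨hyB, h0⟩
          have hne : ∃ t ∈ I, f (i.insertNth t y) ≠ 0 := by
            by_contra hcon
            push_neg at hcon
            have h0 : Set.EqOn (fun s => f (i.insertNth s y)) 0 I := fun t ht => hcon t ht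
            have hz := iteratedDeriv_eqOn_zero isOpen_ball h0 k hciI
            apply hGy
            show dirDeriv v f k (i.insertNth (c i) y) = 0
            rw [← iter y hyB k (c i) hciI]
            simpa using hz
          have hcnt : {t ∈ I | f (i.insertNth t y) = 0}.Countable :=
            oneD_countable _ I isOpen_ball (convex_ball (c i) r).isPreconnected
              (slice_an y hyB) hne
          have hsub : {t | i.insertNth t y ∈ A} ⊆ {t ∈ I | f (i.insertNth t y) = 0} := by
            rintro t ⟨htB, htf⟩
            exact ⟨((insertNth_mem_ball_iff hr i t y).1 htB).1, htf⟩
          exact measure_mono_null hsub (hcnt.measure_zero _)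
        · have hempty : {t | i.insertNth t y ∈ A} = ∅ := by
            ext t
            simp only [mem_setOf_eq, mem_empty_iff_false, iff_false]
            rintro ⟨htB, -⟩
            exact hyB ((insertNth_mem_ball_iff hr i t y).1 htB).2
          rw [hempty]
          simp
      rw [h1, h2, h3]

end Stmt17Aux

open Stmt17Aux

/-- The zero set of a real analytic function, not identically zero on a
connected open set `Ω ⊆ ℝⁿ`, has Lebesgue measure zero. -/
theorem stmt17 (n : ℕ)
    (Ω : Set (EuclideanSpace ℝ (Fin n)))
    (hΩopen : IsOpen Ω) (hΩconn : IsConnected Ω)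
    (f : EuclideanSpace ℝ (Fin n) → ℝ)
    (hf : AnalyticOnNhd ℝ f Ω)
    (hnz : ¬ ∀ x ∈ Ω, f x = 0) :
    volume {x ∈ Ω | f x = 0} = 0 := by
  push_neg at hnz
  obtain ⟨x0, hx0, hfx0⟩ := hnz
  set ψ : EuclideanSpace ℝ (Fin n) ≃L[ℝ] (Fin n → ℝ) :=
    PiLp.continuousLinearEquiv 2 ℝ (fun _ : Fin n => ℝ) with hψ
  set Ω' : Set (Fin n → ℝ) := ψ.symm ⁻¹' Ω with hΩ'
  set F : (Fin n → ℝ) → ℝ := fun x => f (ψ.symm x) with hF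
  have hΩ'open : IsOpen Ω' := hΩopen.preimage ψ.symm.continuous
  have himg : ψ '' Ω = Ω' := by
    ext x
    constructor
    · rintro ⟨a, ha, rfl⟩
      simpa [hΩ'] using ha
    · intro hx
      exact ⟨ψ.symm x, hx, by simp⟩
  have hΩ'conn : IsPreconnected Ω' :=
    himg ▸ (hΩconn.isPreconnected.image ψ ψ.continuous.continuousOn)
  have hF_an : AnalyticOnNhd ℝ F Ω' := by
    have hsymm : AnalyticOnNhd ℝ (ψ.symm : (Fin n → ℝ) → EuclideanSpace ℝ (Fin n)) Ω' := by
      have := (ψ.symm.toContinuousLinearMap).analyticOnNhd Ω'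
      simpa using this
    exact hf.comp hsymm (fun x hx => hx)
  have hnloc : ∀ x ∈ Ω', ¬ F =ᶠ[𝓝 x] 0 := by
    intro x hx hev
    have heq := hF_an.eqOn_zero_of_preconnected_of_eventuallyEq_zero hΩ'conn hx hev
    apply hfx0
    have hx0' : ψ x0 ∈ Ω' := by simpa [hΩ'] using hx0
    have := heq hx0'
    simpa [hF] using this
  have hZ' : volume {x ∈ Ω' | F x = 0} = 0 := by
    apply measure_null_of_locally_null
    rintro x ⟨hxΩ', hFx⟩
    obtain ⟨ρ, hρpos, hρsub⟩ := Metric.isOpen_iff.mp hΩ'open x hxΩ'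
    have hex : ∃ w ∈ ball x ρ, F w ≠ 0 := by
      by_contra hcon
      push_neg at hcon
      exact hnloc x hxΩ'
        (eventually_of_mem (ball_mem_nhds x hρpos) fun w hw => hcon w hw)
    have hb := ball_case n F x ρ (hF_an.mono hρsub) hex
    refine ⟨{w ∈ ball x ρ | F w = 0}, ?_, hb⟩
    rw [mem_nhdsWithin]
    exact ⟨ball x ρ, isOpen_ball, mem_ball_self hρpos, fun w hw => ⟨hw.1, hw.2.2⟩⟩
  have hZmeas : MeasurableSet {x ∈ Ω | f x = 0} := by
    have hopen : IsOpen {x | x ∈ Ω ∧ f x ≠ 0} := by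
      rw [isOpen_iff_mem_nhds]
      rintro x ⟨hxΩ, hxf⟩
      filter_upwards [hΩopen.mem_nhds hxΩ, (hf x hxΩ).continuousAt.eventually_ne hxf]
        with z h1 h2 using ⟨h1, h2⟩
    have heq : {x ∈ Ω | f x = 0} = Ω ∩ {x | x ∈ Ω ∧ f x ≠ 0}ᶜ := by
      ext x
      simp only [mem_setOf_eq, mem_inter_iff, mem_compl_iff]
      tauto
    rw [heq]
    exact hΩopen.measurableSet.inter hopen.measurableSet.compl
  have hmp := (EuclideanSpace.volume_preserving_symm_measurableEquiv_toLp (Fin n)).symm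
  have hkey : volume {x ∈ Ω | f x = 0}
      = volume ((MeasurableEquiv.toLp 2 (Fin n → ℝ)) ⁻¹' {x ∈ Ω | f x = 0}) :=
    (hmp.measure_preimage hZmeas.nullMeasurableSet).symm
  have hpre : (MeasurableEquiv.toLp 2 (Fin n → ℝ)) ⁻¹' {x ∈ Ω | f x = 0}
      = {x ∈ Ω' | F x = 0} := rfl
  rw [hkey, hpre]
  exact hZ'
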